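/- For a smooth function of the form h(x) = (γ·x^{2s} + δ·x^{2s-1})·e^{tx} + (lower order terms in x times e^{tx}), with t ≠ 0 and s ≥ 1, the k-fold iterated integral I^k(h)(x) = ∫_0^x⋯∫ h has leading terms (γ/t^k)·x^{2s} + (δ/t^k - 2ks·γ/t^{k+1})·x^{2s-1} times e^{tx}, plus terms of lower degree in x times e^{tx} and polynomial terms. -/

import Mathlib

/-- The integral operator on formal power series: `I(f)(x) = ∫_0^x f(t) dt`. -/
noncomputable def intOp (f : PowerSeries ℚ) : PowerSeries ℚ :=
  PowerSeries.mk fun n => if n = 0 then 0 else PowerSeries.coeff (n - 1) f / (n : ℚ)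

/-- The formal power series `e^{tx}`. -/
noncomputable def expSeries' (t : ℚ) : PowerSeries ℚ :=
  PowerSeries.mk fun n => t ^ n / (n.factorial : ℚ)

open Polynomial PowerSeries

lemma derivativeFun_eq_derivative (f : PowerSeries ℚ) :
    PowerSeries.derivativeFun f = PowerSeries.derivative ℚ f := rfl

lemma coeff_intOp (f : PowerSeries ℚ) (n : ℕ) :
    PowerSeries.coeff n (intOp f) = if n = 0 then 0 else PowerSeries.coeff (n - 1) f / n := by
  simp [intOp]

lemma intOp_add (f g : PowerSeries ℚ) : intOp (f + g) = intOp f + intOp g := by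
  ext n
  simp only [coeff_intOp, map_add]
  split_ifs <;> ring

lemma intOp_zero : intOp 0 = 0 := by
  ext n; simp [coeff_intOp]

lemma intOp_derivativeFun (f : PowerSeries ℚ) :
    intOp (PowerSeries.derivativeFun f) = f - PowerSeries.C (PowerSeries.coeff 0 f) := by
  ext n
  rcases n with _ | j
  · simp [coeff_intOp]
  · have hj : (j : ℚ) + 1 ≠ 0 := by positivity
    simp only [coeff_intOp, Nat.succ_ne_zero, if_false, Nat.succ_sub_one,
      derivativeFun_eq_derivative, PowerSeries.coeff_derivativeFun, map_sub, PowerSeries.coeff_C]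
    push_cast
    field_simp
    rw [sub_zero]

lemma derivativeFun_exp (t : ℚ) :
    PowerSeries.derivativeFun (expSeries' t) = PowerSeries.C t * expSeries' t := by
  ext n
  have h : ((n+1).factorial : ℚ) = (n+1) * n.factorial := by
    rw [Nat.factorial_succ]; push_cast; ring
  have h2 : (n.factorial : ℚ) ≠ 0 := Nat.cast_ne_zero.mpr n.factorial_ne_zero
  have h3 : ((n:ℚ)+1) ≠ 0 := by positivity
  simp only [derivativeFun_eq_derivative, PowerSeries.coeff_derivativeFun, expSeries', PowerSeries.coeff_mk,
    PowerSeries.coeff_C_mul, h]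
  field_simp
  ring

lemma fund (t : ℚ) (ht : t ≠ 0) (p : Polynomial ℚ) :
    intOp ((p : PowerSeries ℚ) * expSeries' t)
      + intOp (((t⁻¹ • Polynomial.derivative p : Polynomial ℚ) : PowerSeries ℚ) * expSeries' t)
      = ((t⁻¹ • p : Polynomial ℚ) : PowerSeries ℚ) * expSeries' t
        - PowerSeries.C (p.coeff 0 / t) := by
  have key : PowerSeries.derivativeFun
      (((t⁻¹ • p : Polynomial ℚ) : PowerSeries ℚ) * expSeries' t)
      = ((t⁻¹ • Polynomial.derivative p : Polynomial ℚ) : PowerSeries ℚ) * expSeries' t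
        + (p : PowerSeries ℚ) * expSeries' t := by
    rw [PowerSeries.derivativeFun_mul,
      derivativeFun_eq_derivative ((t⁻¹ • p : Polynomial ℚ) : PowerSeries ℚ), PowerSeries.derivativeFun_coe, derivativeFun_exp]
    have : Polynomial.derivative (t⁻¹ • p) = t⁻¹ • Polynomial.derivative p := by
      simp
    rw [this]
    have h2 : ((t⁻¹ • p : Polynomial ℚ) : PowerSeries ℚ) * (PowerSeries.C t * expSeries' t)
        = (p : PowerSeries ℚ) * expSeries' t := by
      rw [← mul_assoc]
      congr 1
      rw [← Polynomial.coe_C, ← Polynomial.coe_mul]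
      rw [Polynomial.smul_eq_C_mul, mul_comm (Polynomial.C t⁻¹ * p), ← mul_assoc,
        ← Polynomial.C_mul, mul_inv_cancel₀ ht, Polynomial.C_1, one_mul]
    simp only [smul_eq_mul]
    rw [h2]
    ring
  have := intOp_derivativeFun (((t⁻¹ • p : Polynomial ℚ) : PowerSeries ℚ) * expSeries' t)
  rw [key, intOp_add] at this
  have hc0 : PowerSeries.coeff 0 (((t⁻¹ • p : Polynomial ℚ) : PowerSeries ℚ) * expSeries' t)
      = p.coeff 0 / t := by
    rw [PowerSeries.coeff_zero_eq_constantCoeff, map_mul]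
    simp [expSeries', div_eq_inv_mul, PowerSeries.constantCoeff_mk,
      ← PowerSeries.coeff_zero_eq_constantCoeff, Polynomial.coeff_coe]
  rw [hc0] at this
  linear_combination this

lemma intOp_poly (p : Polynomial ℚ) :
    ∃ B : Polynomial ℚ, intOp (p : PowerSeries ℚ) = (B : PowerSeries ℚ) := by
  induction p using Polynomial.induction_on' with
  | add f g hf hg =>
    obtain ⟨Bf, hBf⟩ := hf
    obtain ⟨Bg, hBg⟩ := hg
    exact ⟨Bf + Bg, by rw [Polynomial.coe_add, intOp_add, hBf, hBg, Polynomial.coe_add]⟩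
  | monomial n a =>
    refine ⟨Polynomial.monomial (n + 1) (a / (n + 1)), ?_⟩
    ext j
    rw [coeff_intOp, Polynomial.coeff_coe, Polynomial.coeff_coe, Polynomial.coeff_monomial,
      Polynomial.coeff_monomial]
    rcases j with _ | i
    · norm_num
    · rw [if_neg (Nat.succ_ne_zero i), Nat.succ_sub_one]
      by_cases h : n = i
      · subst h
        norm_num
      · rw [if_neg h, if_neg (by omega), zero_div]

lemma coarse (t : ℚ) (ht : t ≠ 0) :
    ∀ n : ℕ, ∀ p : Polynomial ℚ, p.natDegree ≤ n →
    ∃ (B : Polynomial ℚ) (c : ℚ), B.degree ≤ p.degree ∧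
      intOp ((p : PowerSeries ℚ) * expSeries' t)
        = (B : PowerSeries ℚ) * expSeries' t + PowerSeries.C c := by
  intro n
  induction n with
  | zero =>
    intro p hp
    obtain ⟨a, rfl⟩ := Polynomial.natDegree_eq_zero.mp (Nat.le_zero.mp hp)
    have hd : Polynomial.derivative (Polynomial.C a) = 0 := Polynomial.derivative_C
    have := fund t ht (Polynomial.C a)
    rw [hd, smul_zero] at this
    simp only [Polynomial.coe_zero, zero_mul, intOp_zero, add_zero] at this
    refine ⟨t⁻¹ • Polynomial.C a, -(a / t), ?_, ?_⟩
    · exact Polynomial.degree_smul_le _ _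
    · rw [this, Polynomial.coeff_C_zero, map_neg, sub_eq_add_neg]
  | succ n ih =>
    intro p hp
    have hd : (t⁻¹ • Polynomial.derivative p).natDegree ≤ n := by
      refine le_trans (Polynomial.natDegree_smul_le _ _) ?_
      have := Polynomial.natDegree_derivative_le p
      omega
    obtain ⟨B, c, hB, hint⟩ := ih (t⁻¹ • Polynomial.derivative p) hd
    have := fund t ht p
    rw [hint] at this
    refine ⟨t⁻¹ • p - B, -(p.coeff 0 / t) - c, ?_, ?_⟩
    · refine le_trans (Polynomial.degree_sub_le _ _) (max_le (Polynomial.degree_smul_le _ _) ?_)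
      refine le_trans hB ?_
      exact le_trans (Polynomial.degree_smul_le _ _) Polynomial.degree_derivative_le
    · rw [Polynomial.coe_sub, map_sub, map_neg]
      linear_combination this

lemma step (t : ℚ) (ht : t ≠ 0) (m : ℕ) (hm : 1 ≤ m) (γ δ : ℚ) (q : Polynomial ℚ)
    (hq : q.degree < ((m - 1 : ℕ) : WithBot ℕ)) :
    ∃ (q' : Polynomial ℚ) (c : ℚ), q'.degree < ((m - 1 : ℕ) : WithBot ℕ) ∧
      intOp (((Polynomial.monomial m γ + Polynomial.monomial (m - 1) δ + q
          : Polynomial ℚ) : PowerSeries ℚ) * expSeries' t)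
        = ((Polynomial.monomial m (γ / t)
            + Polynomial.monomial (m - 1) (δ / t - m * γ / t ^ 2)
            + q' : Polynomial ℚ) : PowerSeries ℚ) * expSeries' t
          + PowerSeries.C c := by
  set P : Polynomial ℚ := Polynomial.monomial m γ + Polynomial.monomial (m - 1) δ + q with hPdef
  set P₁ : Polynomial ℚ := t⁻¹ • Polynomial.derivative P with hP1def
  set P₂ : Polynomial ℚ := t⁻¹ • Polynomial.derivative P₁ with hP2def
  have hqz : ∀ j, m - 1 ≤ j → q.coeff j = 0 :=
    fun j hj => (Polynomial.degree_lt_iff_coeff_zero q (m - 1)).mp hq j hj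
  have hP : ∀ j, P.coeff j
      = (if m = j then γ else 0) + (if m - 1 = j then δ else 0) + q.coeff j := by
    intro j
    simp [hPdef, Polynomial.coeff_add, Polynomial.coeff_monomial]
  have hPhigh : ∀ j, m < j → P.coeff j = 0 := by
    intro j hj
    rw [hP, if_neg (by omega), if_neg (by omega), hqz j (by omega)]
    ring
  have hPm : P.coeff m = γ := by
    rw [hP, if_pos rfl, if_neg (by omega), hqz m (by omega)]; ring
  have hPm1 : P.coeff (m - 1) = δ := by
    rw [hP, if_neg (by omega), if_pos rfl, hqz (m - 1) le_rfl]; ring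
  have hP1 : ∀ j, P₁.coeff j = t⁻¹ * (P.coeff (j + 1) * (j + 1)) := by
    intro j
    rw [hP1def, Polynomial.coeff_smul, Polynomial.coeff_derivative, smul_eq_mul]
  have hP2 : ∀ j, P₂.coeff j = t⁻¹ * (P₁.coeff (j + 1) * (j + 1)) := by
    intro j
    rw [hP2def, Polynomial.coeff_smul, Polynomial.coeff_derivative, smul_eq_mul]
  have hP2deg : P₂.degree < ((m - 1 : ℕ) : WithBot ℕ) := by
    rw [Polynomial.degree_lt_iff_coeff_zero]
    intro j hj
    rw [hP2, hP1, hPhigh (j + 1 + 1) (by omega)]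
    ring
  obtain ⟨B, c₂, hB, h₂⟩ := coarse t ht P₂.natDegree P₂ le_rfl
  have hBz : ∀ j, m - 1 ≤ j → B.coeff j = 0 := by
    intro j hj
    refine Polynomial.coeff_eq_zero_of_degree_lt (lt_of_le_of_lt hB ?_)
    exact lt_of_lt_of_le hP2deg (by exact_mod_cast hj)
  set N : Polynomial ℚ := t⁻¹ • P - t⁻¹ • P₁ + B with hNdef
  refine ⟨N - Polynomial.monomial m (γ / t)
      - Polynomial.monomial (m - 1) (δ / t - m * γ / t ^ 2),
    -(P.coeff 0 / t) + P₁.coeff 0 / t + c₂, ?_, ?_⟩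
  · rw [Polynomial.degree_lt_iff_coeff_zero]
    intro j hj
    have hm1 : m - 1 + 1 = m := by omega
    simp only [Polynomial.coeff_sub, Polynomial.coeff_add, hNdef,
      Polynomial.coeff_smul, smul_eq_mul, Polynomial.coeff_monomial]
    rcases (by omega : j = m - 1 ∨ j = m ∨ m + 1 ≤ j) with h | h | h
    · subst h
      rw [hP1, hm1, hPm, hPm1, hBz _ le_rfl, if_neg (by omega), if_pos rfl]
      have hc : ((m - 1 : ℕ) : ℚ) + 1 = (m : ℚ) := by
        exact_mod_cast congrArg (fun k : ℕ => (k : ℚ)) hm1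
      rw [hc]
      field_simp
      ring
    · subst h
      rw [hP1, hPm, hPhigh (j + 1) (by omega), hBz _ (by omega), if_pos rfl, if_neg (by omega)]
      ring
    · rw [hP1, hPhigh j (by omega), hPhigh (j + 1) (by omega), hBz _ (by omega),
        if_neg (by omega), if_neg (by omega)]
      ring
  · have hNeq : (Polynomial.monomial m (γ / t)
        + Polynomial.monomial (m - 1) (δ / t - m * γ / t ^ 2)
        + (N - Polynomial.monomial m (γ / t)
          - Polynomial.monomial (m - 1) (δ / t - m * γ / t ^ 2)) : Polynomial ℚ) = N := by
      ring
    rw [hNeq]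
    have e1 := fund t ht P
    have e2 := fund t ht P₁
    rw [← hP1def] at e1
    rw [← hP2def] at e2
    rw [h₂] at e2
    have hcast : ((N : Polynomial ℚ) : PowerSeries ℚ)
        = ((t⁻¹ • P : Polynomial ℚ) : PowerSeries ℚ)
          - ((t⁻¹ • P₁ : Polynomial ℚ) : PowerSeries ℚ) + (B : PowerSeries ℚ) := by
      rw [hNdef]
      push_cast
      ring
    rw [hcast]
    simp only [map_add, map_neg]
    linear_combination e1 - e2

theorem iterated_integral_leading_terms (t : ℚ) (ht : t ≠ 0) (m k : ℕ) (hm : 1 ≤ m) :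
    ∃ q r : Polynomial ℚ, q.degree < ((m - 1 : ℕ) : WithBot ℕ) ∧
      intOp^[k] (((Polynomial.X ^ m : Polynomial ℚ) : PowerSeries ℚ) * expSeries' t)
        = ((Polynomial.monomial m (1 / t ^ k)
            + Polynomial.monomial (m - 1) (-((k * m : ℕ) : ℚ) / t ^ (k + 1))
            + q : Polynomial ℚ) : PowerSeries ℚ) * expSeries' t
          + (r : PowerSeries ℚ) := by
  induction k with
  | zero =>
    refine ⟨0, 0, ?_, ?_⟩
    · rw [Polynomial.degree_zero]
      exact_mod_cast WithBot.bot_lt_coe _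
    · simp [Polynomial.X_pow_eq_monomial]
  | succ k ih =>
    obtain ⟨q, r, hq, heq⟩ := ih
    obtain ⟨q', c, hq', hstep⟩ :=
      step t ht m hm (1 / t ^ k) (-((k * m : ℕ) : ℚ) / t ^ (k + 1)) q hq
    obtain ⟨B, hB⟩ := intOp_poly r
    have hγ : (1 : ℚ) / t ^ k / t = 1 / t ^ (k + 1) := by
      rw [div_div, ← pow_succ]
    have hδ : -((k * m : ℕ) : ℚ) / t ^ (k + 1) / t - m * (1 / t ^ k) / t ^ 2
        = -(((k + 1) * m : ℕ) : ℚ) / t ^ (k + 1 + 1) := by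
      push_cast
      field_simp
      ring
    rw [hγ, hδ] at hstep
    refine ⟨q', B + Polynomial.C c, hq', ?_⟩
    rw [Function.iterate_succ_apply', heq, intOp_add, hstep, hB]
    push_cast
    ring
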